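/- If H_{r-1} is a parity check matrix of a binary code with minimum distance at least 3, then every pair of distinct columns of the doubled matrix H_r = [[0…0|1…1],[H_{r-1}|H_{r-1}]] is linearly independent, i.e., the code defined by H_r has minimum distance at least 3. -/

import Mathlib

/-- The doubling construction: `H_r = [[0…0 | 1…1], [H | H]]`. -/
def doubling {r n : ℕ} (H : Matrix (Fin r) (Fin n) (ZMod 2)) :
    Matrix (Unit ⊕ Fin r) (Fin n ⊕ Fin n) (ZMod 2) :=
  Matrix.of fun i j =>
    match i, j with
    | Sum.inl _, Sum.inl _ => 0
    | Sum.inl _, Sum.inr _ => 1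
    | Sum.inr i, Sum.inl j => H i j
    | Sum.inr i, Sum.inr j => H i j

lemma hn_sum {n : ℕ} (y : Fin n ⊕ Fin n → ZMod 2) :
    hammingNorm y = hammingNorm (fun j => y (Sum.inl j)) + hammingNorm (fun j => y (Sum.inr j)) := by
  simp only [hammingNorm, Finset.card_filter]
  rw [Fintype.sum_sum_type]

lemma parity {n : ℕ} (v : Fin n → ZMod 2) (h : ∑ j, v j = 0) : 2 ∣ hammingNorm v := by
  have hone : ∀ a : ZMod 2, a ≠ 0 → a = 1 := by decide
  have : (hammingNorm v : ZMod 2) = ∑ j, v j := by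
    rw [hammingNorm]
    rw [← Finset.sum_filter_ne_zero (s := Finset.univ)]
    rw [Finset.sum_congr rfl (fun j hj => hone _ (Finset.mem_filter.1 hj).2)]
    simp
  rw [h] at this
  exact (ZMod.natCast_eq_zero_iff _ 2).1 this

/-- If the code with parity check matrix `H` has minimum distance ≥ 3, then the doubled
code has minimum distance ≥ 3, i.e. every pair of distinct columns of the doubled
matrix is linearly independent. -/
theorem stmt_2 {r n : ℕ} (H : Matrix (Fin r) (Fin n) (ZMod 2))
    (hd : ∀ x : Fin n → ZMod 2, Matrix.mulVec H x = 0 → x ≠ 0 → 3 ≤ hammingNorm x) :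
    (∀ y : Fin n ⊕ Fin n → ZMod 2,
        Matrix.mulVec (doubling H) y = 0 → y ≠ 0 → 3 ≤ hammingNorm y) ∧
    (∀ j k : Fin n ⊕ Fin n, j ≠ k →
      LinearIndependent (ZMod 2) ![fun i => doubling H i j, fun i => doubling H i k]) := by
  have main : ∀ y : Fin n ⊕ Fin n → ZMod 2,
      Matrix.mulVec (doubling H) y = 0 → y ≠ 0 → 3 ≤ hammingNorm y := by
    intro y hy hy0
    set y₁ : Fin n → ZMod 2 := fun j => y (Sum.inl j) with hy₁
    set y₂ : Fin n → ZMod 2 := fun j => y (Sum.inr j) with hy₂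
    have h1 : ∑ j, y₂ j = 0 := by
      have := congrFun hy (Sum.inl ())
      simpa [Matrix.mulVec, dotProduct, doubling, Fintype.sum_sum_type] using this
    have h2 : Matrix.mulVec H (y₁ + y₂) = 0 := by
      ext i
      have := congrFun hy (Sum.inr i)
      simp only [Matrix.mulVec, dotProduct, doubling, Fintype.sum_sum_type,
        Matrix.of_apply, Pi.zero_apply] at this ⊢
      simp only [Pi.add_apply, mul_add]
      rw [Finset.sum_add_distrib]
      exact this
    rw [hn_sum y, ← hy₁, ← hy₂]
    by_cases hx : y₁ + y₂ = 0
    · -- y₁ = y₂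
      have heq : y₁ = y₂ := by
        funext j
        have h := congrFun hx j
        simp only [Pi.add_apply, Pi.zero_apply] at h
        rw [eq_neg_of_add_eq_zero_left h, CharTwo.neg_eq]
      have hy2ne : y₂ ≠ 0 := by
        intro h0
        apply hy0
        funext m
        cases m with
        | inl a => have := congrFun (heq.trans h0) a; simpa [hy₁] using this
        | inr a => have := congrFun h0 a; simpa [hy₂] using this
      have hpos : 0 < hammingNorm y₂ := hammingNorm_pos_iff.2 hy2ne
      have hev := parity y₂ h1
      rw [heq]
      omega
    · have h3 := hd _ h2 hx
      have htri : hammingNorm (y₁ + y₂) ≤ hammingNorm y₁ + hammingNorm y₂ := by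
        calc hammingNorm (y₁ + y₂) = hammingDist (y₁ + y₂) 0 := (hammingDist_zero_right _).symm
        _ ≤ hammingDist (y₁ + y₂) y₂ + hammingDist y₂ 0 := hammingDist_triangle _ _ _
        _ = hammingNorm y₁ + hammingNorm y₂ := by
            rw [hammingDist_eq_hammingNorm, hammingDist_zero_right, neg_add_rev, add_comm (-y₂), neg_add_cancel_right]
            simp [hammingNorm]
      omega
  refine ⟨main, fun j k hjk => ?_⟩
  rw [Fintype.linearIndependent_iff]
  intro g hg
  by_contra hg0
  push_neg at hg0
  obtain ⟨i, hi⟩ := hg0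
  set y : Fin n ⊕ Fin n → ZMod 2 := Pi.single j (g 0) + Pi.single k (g 1) with hydef
  have hmul : Matrix.mulVec (doubling H) y = 0 := by
    rw [hydef, Matrix.mulVec_add, Matrix.mulVec_single, Matrix.mulVec_single]
    funext i'
    have := congrFun hg i'
    simp [Fin.sum_univ_two] at this ⊢
    linear_combination this
  have hy0 : y ≠ 0 := by
    intro h
    have hj := congrFun h j
    have hk := congrFun h k
    simp [hydef, Pi.single_eq_of_ne hjk, Pi.single_eq_of_ne (Ne.symm hjk)] at hj hk
    fin_cases i <;> simp_all
  have h3 := main y hmul hy0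
  have hle : hammingNorm y ≤ 2 := by
    have hsub : ({i | y i ≠ 0} : Finset _) ⊆ {j, k} := by
      intro m hm
      simp only [Finset.mem_filter, Finset.mem_univ, true_and] at hm
      by_contra hmjk
      simp only [Finset.mem_insert, Finset.mem_singleton, not_or] at hmjk
      apply hm
      simp [hydef, Pi.single_eq_of_ne hmjk.1, Pi.single_eq_of_ne hmjk.2]
    calc hammingNorm y ≤ ({j, k} : Finset _).card := Finset.card_le_card hsub
    _ ≤ 2 := Finset.card_insert_le _ _ |>.trans (by simp)
  omega
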